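/- If article lengths may exceed the time budget, any algorithm for RAO is Ω(n)-competitive. Concretely: for the instance with T = 2, n articles each of length 3 and hint M = n, where article k has rates (1, M, 1) and all other articles have rates (1, 1, M), the optimal offline value is M + 1, while the expected value of any online algorithm in the random order model is at most (1/n)(M+1) + 2(1 − 1/n) ≤ (2/n + 2/M)·(M+1). -/

import Mathlib

/-- Reading one article online (see the RAO model): decisions based on the history of
previously observed articles and the observations from the current article. -/
def readSteps (A : List (List ℕ) → List ℕ → Bool) (hist : List (List ℕ)) (c : ℕ → ℕ) :
    ℕ → List ℕ → List ℕ
  | 0, obs => obs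
  | fuel + 1, obs =>
      if A hist obs then readSteps A hist c fuel (obs ++ [c (obs.length + 1)]) else obs

/-- Run the online algorithm `A` on a stream of articles (length, rate function) with
the given remaining time budget; returns the total information gained. -/
def runAlg (A : List (List ℕ) → List ℕ → Bool) :
    List (List ℕ) → ℕ → List (ℕ × (ℕ → ℕ)) → ℕ
  | _, _, [] => 0
  | hist, budget, (len, c) :: rest =>
      let obs := readSteps A hist c (min len budget) []
      obs.sum + runAlg A (hist ++ [obs]) (budget - obs.length) rest

lemma runAlg_budget_zero (A : List (List ℕ) → List ℕ → Bool) :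
    ∀ (L : List (ℕ × (ℕ → ℕ))) (hist : List (List ℕ)), runAlg A hist 0 L = 0 := by
  intro L
  induction L with
  | nil => intro hist; rfl
  | cons a L ih =>
    intro hist
    obtain ⟨len, c⟩ := a
    simp only [runAlg, Nat.min_zero, readSteps, List.sum_nil, List.length_nil, Nat.sub_zero,
      Nat.zero_add, zero_add]
    exact ih _

lemma runAlg_budget_one (A : List (List ℕ) → List ℕ → Bool) :
    ∀ (L : List (ℕ → ℕ)) (hist : List (List ℕ)), (∀ c ∈ L, c 1 = 1) →
      runAlg A hist 1 (L.map fun c => (3, c)) ≤ 1 := by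
  intro L
  induction L with
  | nil => intro hist _; simp [runAlg]
  | cons c L ih =>
    intro hist h
    have hc1 : c 1 = 1 := h c List.mem_cons_self
    simp only [List.map_cons, runAlg]
    have hmin : min 3 1 = 1 := rfl
    rw [hmin]
    by_cases hA : A hist [] = true
    · simp only [readSteps, hA, if_true, List.nil_append, List.length_nil, hc1]
      simp only [readSteps, List.sum_cons, List.sum_nil, List.length_cons, List.length_nil]
      rw [runAlg_budget_zero]
      simp
    · simp only [readSteps, hA, if_false, Bool.false_eq_true, List.sum_nil, List.length_nil,
        Nat.sub_zero, zero_add]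
      exact ih _ (fun d hd => h d (List.mem_cons_of_mem _ hd))

/-- The (deterministic) position at which the algorithm first commits to reading an
article, given that all previously seen articles were skipped. -/
def firstRead (A : List (List ℕ) → List ℕ → Bool) : List (List ℕ) → ℕ → ℕ
  | _, 0 => 0
  | hist, m + 1 => if A hist [] then 0 else firstRead A (hist ++ [[]]) m + 1

lemma runAlg_budget_two (A : List (List ℕ) → List ℕ → Bool) :
    ∀ (L : List (ℕ → ℕ)) (hist : List (List ℕ)), (∀ c ∈ L, c 1 = 1) →
      runAlg A hist 2 (L.map fun c => (3, c)) ≤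
        max 2 (1 + (L.getD (firstRead A hist L.length) (fun _ => 1)) 2) := by
  intro L
  induction L with
  | nil => intro hist _; simp [runAlg]
  | cons c L ih =>
    intro hist h
    have hc1 : c 1 = 1 := h c List.mem_cons_self
    simp only [List.map_cons, runAlg]
    have hmin : min 3 2 = 2 := rfl
    rw [hmin]
    by_cases hA : A hist [] = true
    · have hfr : firstRead A hist (c :: L).length = 0 := by
        simp [firstRead, hA]
      rw [List.length_cons, hfr] at *
      simp only [List.getD_cons_zero]
      by_cases hA2 : A hist [1] = true
      · simp only [readSteps, hA, if_true, List.nil_append, List.length_nil, hc1, hA2,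
          List.length_cons, List.append_eq, List.cons_append, List.nil_append]
        simp only [readSteps, List.sum_cons, List.sum_nil, List.length_cons, List.length_nil]
        rw [runAlg_budget_zero]
        norm_num
      · simp only [readSteps, hA, if_true, List.nil_append, List.length_nil, hc1, hA2,
          Bool.false_eq_true, if_false]
        simp only [List.sum_cons, List.sum_nil, List.length_cons, List.length_nil]
        have := runAlg_budget_one A L (hist ++ [[1]]) (fun d hd => h d (List.mem_cons_of_mem _ hd))
        norm_num
        omega
    · have hfr : firstRead A hist (c :: L).length =
          firstRead A (hist ++ [[]]) L.length + 1 := by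
        simp [firstRead, hA]
      rw [hfr]
      simp only [readSteps, hA, if_false, Bool.false_eq_true, List.sum_nil, List.length_nil,
        Nat.sub_zero, zero_add, List.getD_cons_succ]
      exact ih _ (fun d hd => h d (List.mem_cons_of_mem _ hd))

lemma sum_perm_eval (m : ℕ) (i0 : Fin (m + 1)) (f : Fin (m + 1) → ℕ) :
    ∑ π : Equiv.Perm (Fin (m + 1)), f (π i0) = m.factorial * ∑ x, f x := by
  have h1 : ∑ π : Equiv.Perm (Fin (m + 1)), f (π 0)
      = ∑ π : Equiv.Perm (Fin (m + 1)), f (π i0) :=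
    Fintype.sum_equiv (Equiv.mulRight (Equiv.swap 0 i0)) _ _ (fun π => by
      simp [Equiv.Perm.mul_apply, Equiv.swap_apply_right])
  rw [← h1]
  have h2 : ∑ π : Equiv.Perm (Fin (m + 1)), f (π 0)
      = ∑ pe : Fin (m + 1) × Equiv.Perm (Fin m), f pe.1 := by
    refine (Fintype.sum_equiv Equiv.Perm.decomposeFin.symm _ _ ?_).symm
    rintro ⟨p, e⟩
    simp [Equiv.Perm.decomposeFin_symm_apply_zero]
  rw [h2, Fintype.sum_prod_type]
  simp [Finset.sum_const, Fintype.card_perm, Fintype.card_fin, mul_comm,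
    Finset.mul_sum]

lemma sum_if_eq (m M : ℕ) (k : Fin (m + 1)) :
    ∑ x : Fin (m + 1), (if x = k then M + 1 else 2) = (M + 1) + 2 * m := by
  rw [← Finset.add_sum_erase Finset.univ _ (Finset.mem_univ k)]
  simp only [if_pos rfl]
  congr 1
  rw [Finset.sum_congr rfl (fun x hx => if_neg (Finset.ne_of_mem_erase hx)),
    Finset.sum_const, Finset.card_erase_of_mem (Finset.mem_univ k)]
  simp [Finset.card_univ, mul_comm]

/-- If article lengths may exceed the budget, RAO is `Ω(n)`-hard:
with `T = 2`, `n` articles of length `3` and hint `M = n`, where article `k` has rates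
`(1, M, 1)` and all others `(1, 1, M)`, the offline optimum equals `M + 1`, while every
(deterministic) online algorithm has expected value over the uniformly random order at
most `(1/n)(M+1) + 2(1 - 1/n)`, i.e. summed over all `n!` orders, at most
`(n-1)!·((M+1) + 2(n-1))`. -/
theorem lengths_exceeding_budget_lower_bound (n M : ℕ) (hn : 1 ≤ n) (hM : M = n)
    (k : Fin n) (art : Fin n → ℕ → ℕ)
    (hart : art = fun i : Fin n =>
      if i = k then (fun j => if j = 2 then M else 1)
      else (fun j => if j = 3 then M else 1)) :
    -- the offline optimum is M + 1
    ((∃ τ : Fin n → ℕ, (∀ i, τ i ≤ 3) ∧ (∑ i, τ i ≤ 2) ∧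
        (∑ i, ∑ j ∈ Finset.Icc 1 (τ i), art i j) = M + 1) ∧
    (∀ τ : Fin n → ℕ, (∀ i, τ i ≤ 3) → (∑ i, τ i ≤ 2) →
        (∑ i, ∑ j ∈ Finset.Icc 1 (τ i), art i j) ≤ M + 1) ∧
    -- any online algorithm is bad in expectation over the random order
    (∀ A : List (List ℕ) → List ℕ → Bool,
        ∑ π : Equiv.Perm (Fin n),
            runAlg A [] 2 (List.ofFn fun r => (3, art (π r)))
          ≤ Nat.factorial (n - 1) * ((M + 1) + 2 * (n - 1)))) := by
  have hIcc2 : Finset.Icc 1 2 = ({1, 2} : Finset ℕ) := by decide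
  have hartk : ∑ j ∈ Finset.Icc 1 2, art k j = M + 1 := by
    rw [hIcc2, Finset.sum_pair (by norm_num : (1 : ℕ) ≠ 2)]
    simp [hart]
    omega
  refine ⟨⟨fun i => if i = k then 2 else 0, ?_, ?_, ?_⟩, ?_, ?_⟩
  · intro i; dsimp only; split <;> omega
  · simp [Finset.sum_ite_eq']
  · have : ∀ i, ∑ j ∈ Finset.Icc 1 (if i = k then 2 else 0), art i j
        = if i = k then M + 1 else 0 := by
      intro i
      by_cases hi : i = k
      · simp only [hi, if_pos rfl]; exact hartk
      · simp [hi]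
    rw [Finset.sum_congr rfl (fun i _ => this i)]
    simp [Finset.sum_ite_eq']
  · -- upper bound on the offline optimum
    intro τ hτ3 hτ2
    have hτle : ∀ i, τ i ≤ 2 := fun i =>
      le_trans (Finset.single_le_sum (f := τ) (fun _ _ => Nat.zero_le _) (Finset.mem_univ i)) hτ2
    by_cases hk2 : τ k = 2
    · have hkey := Finset.add_sum_erase Finset.univ τ (Finset.mem_univ k)
      have hz : ∑ i ∈ Finset.univ.erase k, τ i = 0 := by omega
      have hz' : ∀ i ∈ Finset.univ.erase k, τ i = 0 :=
        (Finset.sum_eq_zero_iff).mp hz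
      rw [← Finset.add_sum_erase Finset.univ _ (Finset.mem_univ k)]
      have h0 : ∑ i ∈ Finset.univ.erase k, ∑ j ∈ Finset.Icc 1 (τ i), art i j = 0 := by
        refine Finset.sum_eq_zero (fun i hi => ?_)
        rw [hz' i hi]; simp
      rw [h0, hk2, hartk]
    · have hτk : τ k ≤ 1 := by have := hτle k; omega
      have hinner : ∀ i, ∑ j ∈ Finset.Icc 1 (τ i), art i j = τ i := by
        intro i
        have h1 : ∀ j ∈ Finset.Icc 1 (τ i), art i j = 1 := by
          intro j hj
          rw [Finset.mem_Icc] at hj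
          have hjle : j ≤ τ i := hj.2
          have := hτle i
          rw [hart]
          by_cases hi : i = k
          · subst hi
            simp only [if_pos rfl]
            have : j ≠ 2 := by omega
            simp [this]
          · simp only [if_neg hi]
            have : j ≠ 3 := by omega
            simp [this]
        rw [Finset.sum_congr rfl h1]
        simp [Nat.card_Icc]
      rw [Finset.sum_congr rfl (fun i _ => hinner i)]
      exact le_trans hτ2 (by omega)
  · -- the online lower bound
    intro A
    obtain ⟨m, rfl⟩ : ∃ m, n = m + 1 := ⟨n - 1, by omega⟩
    have hform : ∀ π : Equiv.Perm (Fin (m + 1)),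
        (List.ofFn fun r => (3, art (π r)))
          = (List.ofFn fun r => art (π r)).map (fun c => (3, c)) := by
      intro π; rw [List.map_ofFn]; rfl
    have hc1 : ∀ π : Equiv.Perm (Fin (m + 1)), ∀ c ∈ List.ofFn fun r => art (π r), c 1 = 1 := by
      intro π c hc
      rw [List.mem_ofFn] at hc
      obtain ⟨r, rfl⟩ := hc
      rw [hart]
      dsimp only
      split <;> norm_num
    set r0 := firstRead A [] (m + 1) with hr0
    have hlen : ∀ π : Equiv.Perm (Fin (m + 1)),
        (List.ofFn fun r => art (π r)).length = m + 1 := by simp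
    by_cases hr : r0 < m + 1
    · set i0 : Fin (m + 1) := ⟨r0, hr⟩ with hi0
      have hb : ∀ π : Equiv.Perm (Fin (m + 1)),
          runAlg A [] 2 (List.ofFn fun r => (3, art (π r)))
            ≤ (if π i0 = k then M + 1 else 2) := by
        intro π
        rw [hform]
        refine le_trans (runAlg_budget_two A _ [] (hc1 π)) ?_
        rw [hlen π, ← hr0,
          List.getD_eq_getElem _ _ (by rw [hlen π]; exact hr), List.getElem_ofFn]
        have harts : art (π ⟨r0, hr⟩) 2 = (if π i0 = k then M else 1) := by
          rw [hart, hi0]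
          dsimp only
          split <;> simp
        rw [harts, hi0]
        have hM1 : 1 ≤ M := by omega
        split <;> omega
      calc ∑ π : Equiv.Perm (Fin (m + 1)),
              runAlg A [] 2 (List.ofFn fun r => (3, art (π r)))
          ≤ ∑ π : Equiv.Perm (Fin (m + 1)), (if π i0 = k then M + 1 else 2) :=
            Finset.sum_le_sum (fun π _ => hb π)
        _ = m.factorial * ∑ x, (if x = k then M + 1 else 2) := sum_perm_eval m i0 (fun x => if x = k then M + 1 else 2)
        _ = m.factorial * ((M + 1) + 2 * m) := by rw [sum_if_eq]
        _ ≤ Nat.factorial (m + 1 - 1) * ((M + 1) + 2 * (m + 1 - 1)) := by simp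
    · have hb : ∀ π : Equiv.Perm (Fin (m + 1)),
          runAlg A [] 2 (List.ofFn fun r => (3, art (π r))) ≤ 2 := by
        intro π
        rw [hform]
        refine le_trans (runAlg_budget_two A _ [] (hc1 π)) ?_
        rw [hlen π, ← hr0, List.getD_eq_default _ _ (by rw [hlen π]; omega)]
        norm_num
      calc ∑ π : Equiv.Perm (Fin (m + 1)),
              runAlg A [] 2 (List.ofFn fun r => (3, art (π r)))
          ≤ ∑ _π : Equiv.Perm (Fin (m + 1)), 2 := Finset.sum_le_sum (fun π _ => hb π)
        _ = (m + 1).factorial * 2 := by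
            simp [Finset.sum_const, Finset.card_univ, Fintype.card_perm, mul_comm]
        _ ≤ Nat.factorial (m + 1 - 1) * ((M + 1) + 2 * (m + 1 - 1)) := by
            simp only [Nat.add_sub_cancel, Nat.factorial_succ]
            have : M + 1 + 2 * m = 3 * m + 2 := by omega
            rw [this, mul_comm (m + 1) m.factorial, mul_assoc]
            exact Nat.mul_le_mul_left _ (by omega)
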